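/- Let A = (a_{ij}) be an n×n complex matrix and let Φ be an orthogonal basis of ℂ^n consisting of eigenvectors of A; for φ ∈ Φ write λ_φ for the eigenvalue of φ (so Aφ = λ_φ · φ). Then ∑_{φ ∈ Φ} ∑_{χ ∈ Ĝ} λ_φ · |P_χ(φ)|² / ⟨φ, φ⟩ = |G| · ∑_{i} (w i) · (h i) · a_{ii}. (This is the paper's Proposition (prop:per-avg), the exact double average of squared periods weighted by Hecke eigenvalues, in the linear-algebra form in which it is proved, with A the Brandt matrix and the right-hand side equal to h_K·⟨c_K, a(m)⟩.) -/

import Mathlib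

open Finset

namespace ExactDoubleAvgAux

variable {G : Type*} [CommGroup G] [Fintype G] [Fintype (G →* ℂˣ)]

lemma conj_char_inv (χ : G →* ℂˣ) (t : G) :
    (starRingEnd ℂ) ((χ t : ℂ))⁻¹ = (χ t : ℂ) := by
  have hpow : ((χ t : ℂ)) ^ Fintype.card G = 1 := by
    rw [← Units.val_pow_eq_pow_val, ← map_pow, pow_card_eq_one, map_one, Units.val_one]
  have hnorm : ‖(χ t : ℂ)‖ = 1 :=
    Complex.norm_eq_one_of_pow_eq_one hpow Fintype.card_ne_zero
  rw [map_inv₀, ← Complex.inv_eq_conj hnorm, inv_inv]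

lemma sum_char (a : G) [Decidable (a = 1)] :
    ∑ χ : G →* ℂˣ, ((χ a : ℂ)) = if a = 1 then (Fintype.card G : ℂ) else 0 := by
  classical
  have hne : NeZero (Monoid.exponent G) := ⟨Monoid.exponent_ne_zero_of_finite⟩
  have hcard : Fintype.card (G →* ℂˣ) = Fintype.card G := by
    obtain ⟨e⟩ := CommGroup.monoidHom_mulEquiv_of_hasEnoughRootsOfUnity G ℂ
    exact Fintype.card_congr e.toEquiv
  set F : (G →* ℂˣ) →* ℂ := (Units.coeHom ℂ).comp (MonoidHom.eval a) with hF
  have hFapp : ∀ χ : G →* ℂˣ, F χ = ((χ a : ℂ)) := fun χ => rfl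
  have hsum := sum_hom_units F
  have hiff : F = 1 ↔ a = 1 := by
    constructor
    · intro h
      by_contra ha
      obtain ⟨χ, hχ⟩ := CommGroup.exists_apply_ne_one_of_hasEnoughRootsOfUnity G ℂ ha
      apply hχ
      have h2 : F χ = 1 := by rw [h]; rfl
      rw [hFapp] at h2
      exact Units.ext h2
    · intro h
      ext χ
      rw [hFapp, h, map_one, Units.val_one, MonoidHom.one_apply]
  simp_rw [← hFapp]
  rw [hsum, hcard]
  by_cases h : a = 1
  · rw [if_pos h, if_pos (hiff.mpr h)]
  · rw [if_neg h, if_neg (fun hh => h (hiff.mp hh)), Nat.cast_zero]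

lemma sum_char_inv_mul (s t : G) [Decidable (s = t)] :
    ∑ χ : G →* ℂˣ, ((χ s : ℂ))⁻¹ * (χ t : ℂ) =
      if s = t then (Fintype.card G : ℂ) else 0 := by
  classical
  have h : ∀ χ : G →* ℂˣ, ((χ s : ℂ))⁻¹ * (χ t : ℂ) = ((χ (s⁻¹ * t) : ℂ)) := by
    intro χ
    rw [map_mul, map_inv, Units.val_mul, Units.val_inv_eq_inv_val]
  simp_rw [h]
  rw [sum_char (s⁻¹ * t)]
  simp [inv_mul_eq_one]

end ExactDoubleAvgAux
open Finset in
private noncomputable def Bw (n : ℕ) (w : Fin n → ℝ) (u v : Fin n → ℂ) : ℂ :=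
  ∑ i, ((w i : ℂ))⁻¹ * u i * (starRingEnd ℂ) (v i)

/-- Let `A` be an `n × n` complex matrix and `Φ` an orthogonal basis of
`ℂ^n` (with the weighted inner product `⟨φ, ψ⟩ = ∑ i, (w i)⁻¹ φ i conj (ψ i)`) consisting
of eigenvectors of `A`, with eigenvalues `lam φ`.  Then
`∑_{φ ∈ Φ} ∑_{χ ∈ Ĝ} lam φ * |P_χ(φ)|² / ⟨φ, φ⟩ = |G| ∑_i (w i)(h i) a_{ii}`. -/
theorem exact_double_average_of_squared_periods
    (n : ℕ) (hn : 1 ≤ n) (w : Fin n → ℝ) (hw : ∀ i, 0 < w i)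
    (G : Type*) [CommGroup G] [Fintype G] [Fintype (G →* ℂˣ)]
    (x : G → Fin n)
    (A : Matrix (Fin n) (Fin n) ℂ)
    (Φ : Finset (Fin n → ℂ)) (lam : (Fin n → ℂ) → ℂ)
    (hΦ0 : ∀ φ ∈ Φ, φ ≠ 0)
    (hΦorth : ∀ φ ∈ Φ, ∀ ψ ∈ Φ, φ ≠ ψ →
      ∑ i, ((w i : ℂ))⁻¹ * φ i * (starRingEnd ℂ) (ψ i) = 0)
    (hΦspan : Submodule.span ℂ (Φ : Set (Fin n → ℂ)) = ⊤)
    (hEig : ∀ φ ∈ Φ, A.mulVec φ = lam φ • φ) :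
    ∑ φ ∈ Φ, ∑ χ : G →* ℂˣ,
        lam φ * ((‖∑ t : G, φ (x t) * ((χ t : ℂ))⁻¹‖ : ℂ)) ^ 2 /
          (∑ i, ((w i : ℂ))⁻¹ * φ i * (starRingEnd ℂ) (φ i))
      = (Fintype.card G : ℂ) * ∑ i, (w i : ℂ) *
          ((Finset.univ.filter (fun t : G => x t = i)).card : ℂ) * A i i := by
  classical
  have hBdef : ∀ u v : Fin n → ℂ,
      (∑ i, ((w i : ℂ))⁻¹ * u i * (starRingEnd ℂ) (v i)) = Bw n w u v := fun _ _ => rfl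
  simp only [hBdef]
  have hwC : ∀ i, ((w i : ℂ)) ≠ 0 := fun i => by
    exact_mod_cast (hw i).ne'
  -- nonvanishing of the inner product on Φ
  have hBne : ∀ φ ∈ Φ, Bw n w φ φ ≠ 0 := by
    intro φ hφ
    have hre : Bw n w φ φ = ((∑ i, (w i)⁻¹ * Complex.normSq (φ i) : ℝ) : ℂ) := by
      rw [Bw]
      push_cast
      refine Finset.sum_congr rfl fun i _ => ?_
      rw [mul_assoc, Complex.mul_conj]
    rw [hre, Ne, Complex.ofReal_eq_zero]
    have hex : ∃ i, φ i ≠ 0 := by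
      by_contra hc
      push_neg at hc
      exact hΦ0 φ hφ (funext hc)
    obtain ⟨i, hi⟩ := hex
    have hpos : 0 < ∑ i, (w i)⁻¹ * Complex.normSq (φ i) :=
      Finset.sum_pos'
        (fun j _ => mul_nonneg (inv_nonneg.mpr (hw j).le) (Complex.normSq_nonneg _))
        ⟨i, Finset.mem_univ i, mul_pos (inv_pos.mpr (hw i)) (Complex.normSq_pos.mpr hi)⟩
    exact hpos.ne'
  -- the orthogonal expansion operator
  have hBadd : ∀ u v ψ, Bw n w (u + v) ψ = Bw n w u ψ + Bw n w v ψ := by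
    intro u v ψ
    rw [Bw, Bw, Bw, ← Finset.sum_add_distrib]
    exact Finset.sum_congr rfl fun i _ => by simp only [Pi.add_apply]; ring
  have hBsmul : ∀ (c : ℂ) (v ψ), Bw n w (c • v) ψ = c * Bw n w v ψ := by
    intro c v ψ
    rw [Bw, Bw, Finset.mul_sum]
    exact Finset.sum_congr rfl fun i _ => by
      simp only [Pi.smul_apply, smul_eq_mul]; ring
  let L : (Fin n → ℂ) →ₗ[ℂ] (Fin n → ℂ) :=
    { toFun := fun v => ∑ φ ∈ Φ, (Bw n w v φ / Bw n w φ φ) • φ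
      map_add' := fun u v => by
        rw [← Finset.sum_add_distrib]
        refine Finset.sum_congr rfl fun φ _ => ?_
        rw [hBadd, add_div, add_smul]
      map_smul' := fun c v => by
        rw [RingHom.id_apply, Finset.smul_sum]
        refine Finset.sum_congr rfl fun φ _ => ?_
        rw [hBsmul, mul_div_assoc, smul_smul] }
  have hLid : ∀ v, ∑ φ ∈ Φ, (Bw n w v φ / Bw n w φ φ) • φ = v := by
    have hL : L = LinearMap.id := by
      apply LinearMap.ext_on hΦspan
      intro ψ hψ'
      have hψ : ψ ∈ Φ := hψ'
      show ∑ φ ∈ Φ, (Bw n w ψ φ / Bw n w φ φ) • φ = ψ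
      rw [Finset.sum_eq_single_of_mem ψ hψ]
      · rw [div_self (hBne ψ hψ), one_smul]
      · intro φ hφ hne
        have h0 : Bw n w ψ φ = 0 := hΦorth ψ hψ φ hφ (Ne.symm hne)
        rw [h0, zero_div, zero_smul]
    intro v
    exact LinearMap.congr_fun hL v
  -- key diagonal identity
  have hS : ∀ i j : Fin n, ∑ φ ∈ Φ, (starRingEnd ℂ) (φ i) * φ j / Bw n w φ φ
      = if j = i then (w i : ℂ) else 0 := by
    intro i j
    have h1 := hLid (Pi.single i 1 : Fin n → ℂ)
    have h2 := congrFun h1 j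
    rw [Finset.sum_apply] at h2
    have h3 : ∀ φ : Fin n → ℂ,
        Bw n w (Pi.single i 1) φ = ((w i : ℂ))⁻¹ * (starRingEnd ℂ) (φ i) := by
      intro φ
      rw [Bw, Finset.sum_eq_single i]
      · rw [Pi.single_eq_same, mul_one]
      · intro k _ hk
        rw [Pi.single_eq_of_ne hk, mul_zero, zero_mul]
      · intro h; exact absurd (Finset.mem_univ i) h
    simp only [Pi.smul_apply, smul_eq_mul, h3] at h2
    have h4 : (Pi.single i 1 : Fin n → ℂ) j = if j = i then (1:ℂ) else 0 := by
      rcases eq_or_ne j i with h | h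
      · subst h; simp
      · simp [Pi.single_eq_of_ne h, h]
    calc ∑ φ ∈ Φ, (starRingEnd ℂ) (φ i) * φ j / Bw n w φ φ
        = (w i : ℂ) * ∑ φ ∈ Φ, ((w i : ℂ))⁻¹ * (starRingEnd ℂ) (φ i) / Bw n w φ φ * φ j := by
          rw [Finset.mul_sum]
          refine Finset.sum_congr rfl fun φ _ => ?_
          have hwi := mul_inv_cancel₀ (hwC i)
          linear_combination (-((starRingEnd ℂ) (φ i) * φ j / Bw n w φ φ)) * hwi
      _ = (w i : ℂ) * (Pi.single i 1 : Fin n → ℂ) j := by rw [h2]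
      _ = if j = i then (w i : ℂ) else 0 := by rw [h4, mul_ite, mul_one, mul_zero]
  -- the character sum
  have habs : ∀ z : ℂ, ((‖z‖ : ℂ)) ^ 2 = z * (starRingEnd ℂ) z := by
    intro z
    rw [← Complex.ofReal_pow, Complex.sq_norm, Complex.mul_conj]
  have hP : ∀ φ : Fin n → ℂ,
      ∑ χ : G →* ℂˣ, ((‖∑ t : G, φ (x t) * ((χ t : ℂ))⁻¹‖ : ℂ)) ^ 2
        = (Fintype.card G : ℂ) * ∑ t : G, φ (x t) * (starRingEnd ℂ) (φ (x t)) := by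
    intro φ
    have key : ∀ χ : G →* ℂˣ,
        ((‖∑ t : G, φ (x t) * ((χ t : ℂ))⁻¹‖ : ℂ)) ^ 2
          = ∑ s : G, ∑ t : G,
              (φ (x s) * (starRingEnd ℂ) (φ (x t))) * (((χ s : ℂ))⁻¹ * (χ t : ℂ)) := by
      intro χ
      rw [habs, map_sum, Finset.sum_mul_sum]
      refine Finset.sum_congr rfl fun s _ => Finset.sum_congr rfl fun t _ => ?_
      rw [map_mul, ExactDoubleAvgAux.conj_char_inv]
      ring
    simp_rw [key]
    rw [Finset.sum_comm]
    refine Eq.trans (Finset.sum_congr rfl fun s _ => Finset.sum_comm) ?_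
    have hcol : ∀ s t : G,
        ∑ χ : G →* ℂˣ, (φ (x s) * (starRingEnd ℂ) (φ (x t))) * (((χ s : ℂ))⁻¹ * (χ t : ℂ))
          = φ (x s) * (starRingEnd ℂ) (φ (x t))
              * (if s = t then (Fintype.card G : ℂ) else 0) := by
      intro s t
      rw [← Finset.mul_sum, ExactDoubleAvgAux.sum_char_inv_mul]
    simp_rw [hcol, mul_ite, mul_zero]
    rw [Finset.mul_sum]
    refine Finset.sum_congr rfl fun s _ => ?_
    rw [Finset.sum_ite_eq, if_pos (Finset.mem_univ s)]
    ring
  -- diagonal evaluation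
  have hdiag : ∀ i : Fin n,
      ∑ φ ∈ Φ, lam φ * (φ i * (starRingEnd ℂ) (φ i)) / Bw n w φ φ = (w i : ℂ) * A i i := by
    intro i
    have h1 : ∀ φ ∈ Φ, lam φ * (φ i * (starRingEnd ℂ) (φ i)) / Bw n w φ φ
        = ∑ k, A i k * ((starRingEnd ℂ) (φ i) * φ k / Bw n w φ φ) := by
      intro φ hφ
      have h2 : lam φ * φ i = ∑ k, A i k * φ k := by
        have h := congrFun (hEig φ hφ) i
        rw [Pi.smul_apply, smul_eq_mul] at h
        rw [← h]
        simp [Matrix.mulVec, dotProduct]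
      calc lam φ * (φ i * (starRingEnd ℂ) (φ i)) / Bw n w φ φ
          = (lam φ * φ i) * (starRingEnd ℂ) (φ i) / Bw n w φ φ := by ring
        _ = (∑ k, A i k * φ k) * (starRingEnd ℂ) (φ i) / Bw n w φ φ := by rw [h2]
        _ = ∑ k, A i k * ((starRingEnd ℂ) (φ i) * φ k / Bw n w φ φ) := by
            rw [Finset.sum_mul, Finset.sum_div]
            exact Finset.sum_congr rfl fun k _ => by ring
    rw [Finset.sum_congr rfl h1, Finset.sum_comm]
    have h5 : ∀ k : Fin n, ∑ φ ∈ Φ, A i k * ((starRingEnd ℂ) (φ i) * φ k / Bw n w φ φ)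
        = A i k * (if k = i then (w i : ℂ) else 0) := by
      intro k
      rw [← Finset.mul_sum, hS i k]
    simp_rw [h5, mul_ite, mul_zero]
    rw [Finset.sum_ite_eq', if_pos (Finset.mem_univ i)]
    ring
  -- assemble
  calc ∑ φ ∈ Φ, ∑ χ : G →* ℂˣ,
        lam φ * ((‖∑ t : G, φ (x t) * ((χ t : ℂ))⁻¹‖ : ℂ)) ^ 2 / Bw n w φ φ
      = ∑ φ ∈ Φ, (lam φ / Bw n w φ φ)
          * ∑ χ : G →* ℂˣ, ((‖∑ t : G, φ (x t) * ((χ t : ℂ))⁻¹‖ : ℂ)) ^ 2 := by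
        refine Finset.sum_congr rfl fun φ _ => ?_
        rw [Finset.mul_sum]
        exact Finset.sum_congr rfl fun χ _ => by ring
    _ = ∑ φ ∈ Φ, (Fintype.card G : ℂ)
          * ∑ t : G, lam φ * (φ (x t) * (starRingEnd ℂ) (φ (x t))) / Bw n w φ φ := by
        refine Finset.sum_congr rfl fun φ _ => ?_
        rw [hP]
        have hstep : (lam φ / Bw n w φ φ) * ∑ t : G, φ (x t) * (starRingEnd ℂ) (φ (x t))
            = ∑ t : G, lam φ * (φ (x t) * (starRingEnd ℂ) (φ (x t))) / Bw n w φ φ := by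
          rw [Finset.mul_sum]
          exact Finset.sum_congr rfl fun t _ => by ring
        rw [← hstep]
        ring
    _ = (Fintype.card G : ℂ) * ∑ t : G,
          ∑ φ ∈ Φ, lam φ * (φ (x t) * (starRingEnd ℂ) (φ (x t))) / Bw n w φ φ := by
        rw [← Finset.mul_sum]
        congr 1
        exact Finset.sum_comm
    _ = (Fintype.card G : ℂ) * ∑ t : G, (w (x t) : ℂ) * A (x t) (x t) := by
        congr 1
        exact Finset.sum_congr rfl fun t _ => hdiag (x t)
    _ = (Fintype.card G : ℂ) * ∑ i, (w i : ℂ) *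
          ((Finset.univ.filter (fun t : G => x t = i)).card : ℂ) * A i i := by
        congr 1
        rw [← Finset.sum_fiberwise Finset.univ x (fun t => (w (x t) : ℂ) * A (x t) (x t))]
        refine Finset.sum_congr rfl fun i _ => ?_
        have hmem : ∀ t ∈ Finset.univ.filter (fun t : G => x t = i),
            (w (x t) : ℂ) * A (x t) (x t) = (w i : ℂ) * A i i := by
          intro t ht
          rw [(Finset.mem_filter.mp ht).2]
        rw [Finset.sum_congr rfl hmem, Finset.sum_const, nsmul_eq_mul]
        ring
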